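/- Let δ > 0 and φ₀ ∈ ℝ, and define φ(x) = φ₀ + 2·ln(cosh(√(δ/2)·e^{-φ₀/2}·x)). Then φ satisfies φ''(x) = δ·e^{-φ(x)} for all x ∈ ℝ, with φ(0) = φ₀ and φ'(0) = 0. -/

import Mathlib

open Real

lemma phi_hasDerivAt (c a x : ℝ) :
    HasDerivAt (fun x : ℝ => c + 2 * Real.log (Real.cosh (a * x)))
      (2 * a * (Real.sinh (a * x) / Real.cosh (a * x))) x := by
  have h1 : HasDerivAt (fun x : ℝ => a * x) a x := by
    simpa using (hasDerivAt_id x).const_mul a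
  have h2 : HasDerivAt (fun x : ℝ => Real.cosh (a * x)) (Real.sinh (a * x) * a) x :=
    h1.cosh
  have h3 : HasDerivAt (fun x : ℝ => Real.log (Real.cosh (a * x)))
      (Real.sinh (a * x) * a / Real.cosh (a * x)) x :=
    h2.log (Real.cosh_pos _).ne'
  have := (h3.const_mul 2).const_add c
  convert this using 1
  all_goals first | rfl | ring

lemma deriv_phi (c a : ℝ) :
    deriv (fun x : ℝ => c + 2 * Real.log (Real.cosh (a * x)))
      = fun x => 2 * a * (Real.sinh (a * x) / Real.cosh (a * x)) := by
  funext x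
  exact (phi_hasDerivAt c a x).deriv

lemma deriv2_phi (a x : ℝ) :
    deriv (fun x : ℝ => 2 * a * (Real.sinh (a * x) / Real.cosh (a * x))) x
      = 2 * a ^ 2 / Real.cosh (a * x) ^ 2 := by
  have h1 : HasDerivAt (fun x : ℝ => a * x) a x := by
    simpa using (hasDerivAt_id x).const_mul a
  have hs : HasDerivAt (fun x : ℝ => Real.sinh (a * x)) (Real.cosh (a * x) * a) x := h1.sinh
  have hc : HasDerivAt (fun x : ℝ => Real.cosh (a * x)) (Real.sinh (a * x) * a) x := h1.cosh
  have hd := (hs.div hc (Real.cosh_pos (a * x)).ne').const_mul (2 * a)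
  have key : 2 * a * ((Real.cosh (a*x) * a * Real.cosh (a*x) - Real.sinh (a*x) * (Real.sinh (a*x) * a)) / Real.cosh (a*x) ^ 2) = 2 * a ^ 2 / Real.cosh (a * x) ^ 2 := by
    have hid : Real.cosh (a*x) ^ 2 - Real.sinh (a*x) ^ 2 = 1 := Real.cosh_sq_sub_sinh_sq (a*x)
    have : Real.cosh (a*x) * a * Real.cosh (a*x) - Real.sinh (a*x) * (Real.sinh (a*x) * a)
        = a * (Real.cosh (a*x) ^ 2 - Real.sinh (a*x) ^ 2) := by ring
    rw [this, hid]
    ring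
  have hd' : HasDerivAt (fun x : ℝ => 2 * a * (Real.sinh (a * x) / Real.cosh (a * x)))
      (2 * a ^ 2 / Real.cosh (a * x) ^ 2) x := by
    rw [← key]; exact hd
  exact hd'.deriv

theorem liquid_potential_solution (δ φ₀ : ℝ) (hδ : 0 < δ) :
    let φ : ℝ → ℝ := fun x =>
      φ₀ + 2 * Real.log (Real.cosh (Real.sqrt (δ / 2) * Real.exp (-φ₀ / 2) * x))
    (∀ x : ℝ, deriv (deriv φ) x = δ * Real.exp (-(φ x))) ∧
      φ 0 = φ₀ ∧ deriv φ 0 = 0 := by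
  intro φ
  set a : ℝ := Real.sqrt (δ / 2) * Real.exp (-φ₀ / 2) with ha
  have hφ : φ = fun x : ℝ => φ₀ + 2 * Real.log (Real.cosh (a * x)) := rfl
  have ha2 : 2 * a ^ 2 = δ * Real.exp (-φ₀) := by
    rw [ha, mul_pow, Real.sq_sqrt (by linarith : (0:ℝ) ≤ δ / 2), ← Real.exp_nat_mul]
    rw [show ((2:ℕ) : ℝ) * (-φ₀ / 2) = -φ₀ by ring]
    ring
  refine ⟨?_, ?_, ?_⟩
  · intro x
    rw [hφ, deriv_phi, deriv2_phi]
    have hexp : Real.exp (-(φ x)) = Real.exp (-φ₀) / Real.cosh (a * x) ^ 2 := by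
      rw [hφ]
      simp only [neg_add]
      rw [Real.exp_add, Real.exp_neg (2 * Real.log (Real.cosh (a * x)))]
      rw [show 2 * Real.log (Real.cosh (a * x)) = Real.log (Real.cosh (a * x) ^ 2) by
        rw [Real.log_pow]; push_cast; ring]
      rw [Real.exp_log (by positivity)]
      ring
    rw [hexp, show δ * (Real.exp (-φ₀) / Real.cosh (a * x) ^ 2)
      = δ * Real.exp (-φ₀) / Real.cosh (a * x) ^ 2 by ring, ← ha2]
  · simp [hφ]
  · rw [hφ, deriv_phi]
    simp
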